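/- Let X, Y be two-dimensional smooth real Banach spaces with Y strictly convex. Let T : X → Y be a rank one operator with ‖T‖ = 1 attaining its norm at a unit vector x. If (x, Tx) is not a CPP, then T is an extreme contraction. -/

import Mathlib

open Metric

/-- Birkhoff-James orthogonality: `x ⊥_B y` iff `‖x + t y‖ ≥ ‖x‖` for all real `t`. -/
def BJOrth {X : Type*} [NormedAddCommGroup X] [NormedSpace ℝ X] (x y : X) : Prop :=
  ∀ t : ℝ, ‖x‖ ≤ ‖x + t • y‖

/-- `(x, y)` is a compatible point pair with constant `(r, μ)`. -/
def IsCPPConst {X Y : Type*} [NormedAddCommGroup X] [NormedSpace ℝ X]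
    [NormedAddCommGroup Y] [NormedSpace ℝ Y] (x : X) (y : Y) (r μ : ℝ) : Prop :=
  ∀ z : X, ‖z‖ = 1 → BJOrth x z → ∀ w : Y, ‖w‖ = 1 → BJOrth y w →
    ∀ a b : ℝ, ‖a • x + b • z - x‖ ≤ r → ‖a • x + b • z‖ = 1 →
      ‖a • y + (b * μ) • w‖ ≤ 1

/-- `(x, y)` is a compatible point pair (CPP). -/
def IsCPP {X Y : Type*} [NormedAddCommGroup X] [NormedSpace ℝ X]
    [NormedAddCommGroup Y] [NormedSpace ℝ Y] (x : X) (y : Y) : Prop :=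
  ∃ r > 0, ∃ μ > 0, IsCPPConst x y r μ

/-- `(x, y)` is a weakly compatible point pair (weak CPP). -/
def IsWeakCPP {X Y : Type*} [NormedAddCommGroup X] [NormedSpace ℝ X]
    [NormedAddCommGroup Y] [NormedSpace ℝ Y] (x : X) (y : Y) : Prop :=
  ∃ z : X, ‖z‖ = 1 ∧ BJOrth x z ∧ ∃ w : Y, ‖w‖ = 1 ∧ BJOrth y w ∧
    ∃ r > 0, ∃ μ > 0, ∀ a b : ℝ, ‖a • x + b • z - x‖ ≤ r → ‖a • x + b • z‖ = 1 →
      ‖a • y + (b * μ) • w‖ ≤ 1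

/-- A normed space is smooth if every unit vector has a unique supporting functional. -/
def SmoothSp (X : Type*) [NormedAddCommGroup X] [NormedSpace ℝ X] : Prop :=
  ∀ x : X, ‖x‖ = 1 → ∃! f : X →L[ℝ] ℝ, ‖f‖ = 1 ∧ f x = 1

open Module

section Aux
variable {X : Type*} [NormedAddCommGroup X] [NormedSpace ℝ X]

lemma aux_abs_le {x z : X} (hx : ‖x‖ = 1) (h : BJOrth x z) (a c : ℝ) :
    |a| ≤ ‖a • x + c • z‖ := by
  rcases eq_or_ne a 0 with rfl | ha
  · simp
  · have h2 : a • x + c • z = a • (x + (c / a) • z) := by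
      rw [smul_add, smul_smul, mul_div_cancel₀ _ ha]
    rw [h2, norm_smul, Real.norm_eq_abs]
    have := h (c / a)
    rw [hx] at this
    nlinarith [abs_nonneg a]

lemma aux_indep {x z : X} (hx : ‖x‖ = 1) (hz : z ≠ 0) (h : BJOrth x z) :
    LinearIndependent ℝ ![x, z] := by
  rw [linearIndependent_fin2]
  refine ⟨by simpa using hz, fun a hax => ?_⟩
  have h1 := h (-a)
  simp only [Matrix.cons_val_one, Matrix.head_cons, Matrix.cons_val_zero] at hax
  rw [hx, neg_smul, hax, add_neg_cancel, norm_zero] at h1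
  linarith

lemma aux_support [FiniteDimensional ℝ X] (hd : finrank ℝ X = 2) {x z : X}
    (hx : ‖x‖ = 1) (hz : z ≠ 0) (h : BJOrth x z) :
    ∃ g : X →L[ℝ] ℝ, ‖g‖ = 1 ∧ g x = 1 ∧ g z = 0 := by
  have hli := aux_indep hx hz h
  have hcard : Fintype.card (Fin 2) = finrank ℝ X := by simp [hd]
  let b := basisOfLinearIndependentOfCardEqFinrank hli hcard
  have hb0 : b 0 = x := by
    simp [b, coe_basisOfLinearIndependentOfCardEqFinrank]
  have hb1 : b 1 = z := by
    simp [b, coe_basisOfLinearIndependentOfCardEqFinrank]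
  let g : X →L[ℝ] ℝ := LinearMap.toContinuousLinearMap (b.coord 0)
  have hbound : ∀ v : X, ‖g v‖ ≤ 1 * ‖v‖ := by
    intro v
    have hv : (b.repr v 0) • x + (b.repr v 1) • z = v := by
      have := b.sum_repr v
      rw [Fin.sum_univ_two, hb0, hb1] at this
      exact this
    have := aux_abs_le hx h (b.repr v 0) (b.repr v 1)
    rw [hv] at this
    simpa [g, Real.norm_eq_abs, Basis.coord_apply] using this
  have hgx : g x = 1 := by
    simp [g, Basis.coord_apply, ← hb0, Basis.repr_self]
  have hgz : g z = 0 := by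
    simp [g, Basis.coord_apply, ← hb1, Basis.repr_self, Finsupp.single_apply]
  refine ⟨g, le_antisymm (g.opNorm_le_bound (by norm_num) (by simpa using hbound)) ?_, hgx, hgz⟩
  calc (1:ℝ) = ‖g x‖ := by rw [hgx]; simp
  _ ≤ ‖g‖ * ‖x‖ := g.le_opNorm x
  _ = ‖g‖ := by rw [hx, mul_one]

lemma aux_fz [FiniteDimensional ℝ X] (hX : SmoothSp X) (hd : finrank ℝ X = 2)
    {x z : X} {f : X →L[ℝ] ℝ} (hx : ‖x‖ = 1) (hz : z ≠ 0) (h : BJOrth x z)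
    (hf : ‖f‖ = 1) (hfx : f x = 1) : f z = 0 := by
  obtain ⟨f₀, _, huniq⟩ := hX x hx
  obtain ⟨g, hg1, hg2, hg3⟩ := aux_support hd hx hz h
  rw [show f = f₀ from huniq f ⟨hf, hfx⟩, ← show g = f₀ from huniq g ⟨hg1, hg2⟩]
  exact hg3

lemma aux_sign [FiniteDimensional ℝ X] (hd : finrank ℝ X = 2) {f : X →L[ℝ] ℝ}
    {x₀ z z' : X} (hfx : f x₀ = 1) (hz : ‖z‖ = 1) (hz' : ‖z'‖ = 1)
    (h1 : f z = 0) (h2 : f z' = 0) : z' = z ∨ z' = -z := by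
  have hz0 : z ≠ 0 := by intro h; rw [h, norm_zero] at hz; norm_num at hz
  have hz'0 : z' ≠ 0 := by intro h; rw [h, norm_zero] at hz'; norm_num at hz'
  by_cases hli : LinearIndependent ℝ ![z, z']
  · exfalso
    have hcard : Fintype.card (Fin 2) = finrank ℝ X := by simp [hd]
    let b := basisOfLinearIndependentOfCardEqFinrank hli hcard
    have : (f : X →ₗ[ℝ] ℝ) = 0 := by
      apply b.ext
      intro i
      fin_cases i <;>
        simp [b, coe_basisOfLinearIndependentOfCardEqFinrank, h1, h2]
    have : f x₀ = 0 := by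
      have := congrArg (fun m => m x₀) this; simpa using this
    rw [hfx] at this; norm_num at this
  · rw [linearIndependent_fin2] at hli
    push_neg at hli
    obtain ⟨a, ha⟩ := hli (by simpa using hz'0)
    simp only [Matrix.cons_val_one, Matrix.head_cons, Matrix.cons_val_zero] at ha
    have hnorm : |a| = 1 := by
      have := congrArg norm ha
      rw [norm_smul, Real.norm_eq_abs, hz', hz, mul_one] at this
      exact this
    rcases (abs_eq (by norm_num : (0:ℝ) ≤ 1)).mp hnorm with h | h
    · left; rw [h, one_smul] at ha; exact ha
    · right; rw [h, neg_one_smul] at ha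
      rw [← ha, neg_neg]

lemma aux_ker [FiniteDimensional ℝ X] (hd : finrank ℝ X = 2) (f : X →L[ℝ] ℝ) :
    ∃ z : X, ‖z‖ = 1 ∧ f z = 0 := by
  have : LinearMap.ker (f : X →ₗ[ℝ] ℝ) ≠ ⊥ := by
    intro hbot
    have hinj : Function.Injective (f : X →ₗ[ℝ] ℝ) := LinearMap.ker_eq_bot.mp hbot
    have := LinearMap.finrank_le_finrank_of_injective hinj
    rw [hd, finrank_self] at this
    omega
  obtain ⟨v, hv, hv0⟩ := Submodule.exists_mem_ne_zero_of_ne_bot this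
  refine ⟨‖v‖⁻¹ • v, ?_, ?_⟩
  · rw [norm_smul, norm_inv, norm_norm, inv_mul_cancel₀ (norm_ne_zero_iff.mpr hv0)]
  · rw [map_smul]
    have h0 : f v = 0 := LinearMap.mem_ker.mp hv
    simp [h0]

lemma aux_mult [FiniteDimensional ℝ X] {Y : Type*} [NormedAddCommGroup Y] [NormedSpace ℝ Y]
    (T : X →L[ℝ] Y) (hrank : Module.rank ℝ (LinearMap.range (T : X →ₗ[ℝ] Y)) = 1)
    (x z : X) (hy0 : T x ≠ 0) : ∃ c : ℝ, c • (T x) = T z := by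
  have hfr : finrank ℝ (LinearMap.range (T : X →ₗ[ℝ] Y)) = 1 := by
    simp [finrank, hrank]
  have hymem : T x ∈ LinearMap.range (T : X →ₗ[ℝ] Y) := ⟨x, rfl⟩
  have hzmem : T z ∈ LinearMap.range (T : X →ₗ[ℝ] Y) := ⟨z, rfl⟩
  have := (finrank_eq_one_iff_of_nonzero' (⟨T x, hymem⟩ : LinearMap.range (T : X →ₗ[ℝ] Y))
    (by simpa [Submodule.mk_eq_zero] using hy0)).mp hfr ⟨T z, hzmem⟩
  obtain ⟨c, hc⟩ := this
  exact ⟨c, by simpa [Subtype.ext_iff] using hc⟩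

end Aux

theorem stmt8 {X Y : Type*} [NormedAddCommGroup X] [NormedSpace ℝ X]
    [NormedAddCommGroup Y] [NormedSpace ℝ Y] [StrictConvexSpace ℝ Y]
    (hdX : Module.finrank ℝ X = 2) (hdY : Module.finrank ℝ Y = 2)
    [FiniteDimensional ℝ X] [FiniteDimensional ℝ Y]
    (hX : SmoothSp X) (hY : SmoothSp Y) (T : X →L[ℝ] Y) (hT : ‖T‖ = 1)
    (hrank : Module.rank ℝ (LinearMap.range (T : X →ₗ[ℝ] Y)) = 1)
    (x : X) (hx : ‖x‖ = 1) (hTx : ‖T x‖ = 1)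
    (hncpp : ¬ IsCPP x (T x)) :
    T ∈ Set.extremePoints ℝ (closedBall (0 : X →L[ℝ] Y) 1) := by
  rw [mem_extremePoints]
  refine ⟨mem_closedBall_zero_iff.mpr (le_of_eq hT), ?_⟩
  intro A hA B hB hseg
  by_contra hcon
  apply hncpp
  set y := T x with hy
  obtain ⟨α, β, hα, hβ, hαβ, hsum⟩ := hseg
  have hAle : ‖A‖ ≤ 1 := mem_closedBall_zero_iff.mp hA
  have hBle : ‖B‖ ≤ 1 := mem_closedBall_zero_iff.mp hB
  have hy0 : y ≠ 0 := by intro h; rw [h, norm_zero] at hTx; norm_num at hTx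
  have happ : α • A x + β • B x = y := by
    have := congrArg (fun S : X →L[ℝ] Y => S x) hsum
    simpa using this
  have hAxle : ‖A x‖ ≤ 1 := by
    calc ‖A x‖ ≤ ‖A‖ * ‖x‖ := A.le_opNorm x
    _ = ‖A‖ := by rw [hx, mul_one]
    _ ≤ 1 := hAle
  have hBxle : ‖B x‖ ≤ 1 := by
    calc ‖B x‖ ≤ ‖B‖ * ‖x‖ := B.le_opNorm x
    _ = ‖B‖ := by rw [hx, mul_one]
    _ ≤ 1 := hBle
  have hABx : A x = B x := by
    by_contra hne
    have hcomb := norm_combo_lt_of_ne hAxle hBxle hne hα hβ hαβ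
    rw [happ, hTx] at hcomb
    exact lt_irrefl 1 hcomb
  have hAx : A x = y := by
    rw [← happ, hABx, ← add_smul, hαβ, one_smul]
  have hBx : B x = y := by rw [← hABx]; exact hAx
  have hAT : A ≠ T := by
    intro h
    apply hcon
    refine ⟨h, ?_⟩
    have h2 := hsum
    rw [h] at h2
    have h3 : β • B = β • T := by
      have h4 : β • B = T - α • T := by
        rw [eq_sub_iff_add_eq, add_comm]; exact h2
      rw [h4, show T - α • T = (1 - α) • T from by rw [sub_smul, one_smul],
        show (1:ℝ) - α = β from by linarith]
    exact smul_right_injective _ (ne_of_gt hβ) h3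
  set E := A - T with hE
  have hE0 : E ≠ 0 := sub_ne_zero.mpr hAT
  have hEx : E x = 0 := by
    simp [hE, ContinuousLinearMap.sub_apply, hAx, hy]
  obtain ⟨f, ⟨hfn, hfx⟩, hfu⟩ := hX x hx
  obtain ⟨z, hz1, hfz⟩ := aux_ker hdX f
  have hz0 : z ≠ 0 := by intro h; rw [h, norm_zero] at hz1; norm_num at hz1
  have hoxz : BJOrth x z := by
    intro t
    have hft : f (x + t • z) = 1 := by simp [map_add, hfx, hfz]
    calc ‖x‖ = ‖f (x + t • z)‖ := by rw [hft, hx]; simp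
    _ ≤ ‖f‖ * ‖x + t • z‖ := f.le_opNorm _
    _ = ‖x + t • z‖ := by rw [hfn, one_mul]
  obtain ⟨g, ⟨hgn, hgy⟩, hgu⟩ := hY y hTx
  have hcompf : ∀ S : X →L[ℝ] Y, ‖S‖ ≤ 1 → S x = y → g.comp S = f := by
    intro S hS hSx
    apply hfu
    constructor
    · apply le_antisymm
      · refine le_trans (ContinuousLinearMap.opNorm_comp_le g S) ?_
        rw [hgn, one_mul]; exact hS
      · calc (1:ℝ) = ‖(g.comp S) x‖ := by simp [hSx, hgy]
        _ ≤ ‖g.comp S‖ * ‖x‖ := (g.comp S).le_opNorm x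
        _ = ‖g.comp S‖ := by rw [hx, mul_one]
    · simp [hSx, hgy]
  have hgT : g.comp T = f := hcompf T (le_of_eq hT) rfl
  have hgA : g.comp A = f := hcompf A hAle hAx
  have hTz : T z = 0 := by
    obtain ⟨c, hc⟩ := aux_mult T hrank x z (by rw [← hy]; exact hy0)
    have hgTz : g (T z) = 0 := by
      have := congrArg (fun m : X →L[ℝ] ℝ => m z) hgT
      simpa [hfz] using this
    rw [← hc, map_smul, smul_eq_mul, ← hy, hgy, mul_one] at hgTz
    rw [← hc, hgTz, zero_smul]
  have hAzE : A z = E z := by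
    simp [hE, ContinuousLinearMap.sub_apply, hTz]
  have hEz0 : E z ≠ 0 := by
    intro h
    apply hE0
    have hli := aux_indep hx hz0 hoxz
    have hcard : Fintype.card (Fin 2) = finrank ℝ X := by simp [hdX]
    let b := basisOfLinearIndependentOfCardEqFinrank hli hcard
    apply ContinuousLinearMap.coe_injective
    apply b.ext
    intro i
    fin_cases i <;>
      simp [b, coe_basisOfLinearIndependentOfCardEqFinrank, hEx, h]
  have hgE : g (E z) = 0 := by
    have h1 : g (A z) = 0 := by
      have := congrArg (fun m : X →L[ℝ] ℝ => m z) hgA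
      simpa [hfz] using this
    rw [← hAzE]; exact h1
  set w : Y := ‖E z‖⁻¹ • E z with hw
  have hEzn : (0:ℝ) < ‖E z‖ := norm_pos_iff.mpr hEz0
  have hw1 : ‖w‖ = 1 := by
    rw [hw, norm_smul, norm_inv, norm_norm, inv_mul_cancel₀ (ne_of_gt hEzn)]
  have hgw : g w = 0 := by rw [hw, map_smul, hgE, smul_zero]
  have hoyw : BJOrth y w := by
    intro t
    have hgt : g (y + t • w) = 1 := by simp [map_add, hgy, hgw]
    calc ‖y‖ = ‖g (y + t • w)‖ := by rw [hgt, hTx]; simp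
    _ ≤ ‖g‖ * ‖y + t • w‖ := g.le_opNorm _
    _ = ‖y + t • w‖ := by rw [hgn, one_mul]
  set κ := α / β with hκdef
  have hκ : (0:ℝ) < κ := div_pos hα hβ
  have hBz : B z = (-κ) • E z := by
    have h1 : α • A z + β • B z = T z := by
      have := congrArg (fun S : X →L[ℝ] Y => S z) hsum
      simpa using this
    rw [hTz, hAzE] at h1
    have h2 : β • B z = -(α • E z) := eq_neg_of_add_eq_zero_left (by rw [add_comm]; exact h1)
    have h3 : B z = β⁻¹ • (β • B z) := by
      rw [smul_smul, inv_mul_cancel₀ (ne_of_gt hβ), one_smul]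
    rw [h3, h2, smul_neg, smul_smul, ← neg_smul, hκdef]
    congr 1
    field_simp
  set m := min 1 κ with hmdef
  have hm0 : (0:ℝ) < m := lt_min one_pos hκ
  have hm1 : m ≤ 1 := min_le_left _ _
  have hmκ : m ≤ κ := min_le_right _ _
  have hay : ∀ a : ℝ, |a| ≤ 1 → ‖a • y‖ ≤ 1 := by
    intro a ha
    rw [norm_smul, Real.norm_eq_abs, hTx, mul_one]; exact ha
  have fact1 : ∀ a c : ℝ, ‖a • x + c • z‖ = 1 → ‖a • y + (m * c) • E z‖ ≤ 1 := by
    intro a c hc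
    have ha1 : |a| ≤ 1 := by rw [← hc]; exact aux_abs_le hx hoxz a c
    have hA1 : ‖a • y + c • E z‖ ≤ 1 := by
      have heq : a • y + c • E z = A (a • x + c • z) := by
        rw [map_add, map_smul, map_smul, hAx, hAzE]
      rw [heq]
      calc ‖A (a • x + c • z)‖ ≤ ‖A‖ * ‖a • x + c • z‖ := A.le_opNorm _
      _ ≤ 1 := by rw [hc, mul_one]; exact hAle
    have hid : a • y + (m * c) • E z
        = (1 - m) • (a • y) + m • (a • y + c • E z) := by module
    rw [hid]
    calc ‖(1 - m) • (a • y) + m • (a • y + c • E z)‖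
        ≤ ‖(1 - m) • (a • y)‖ + ‖m • (a • y + c • E z)‖ := norm_add_le _ _
    _ = (1 - m) * ‖a • y‖ + m * ‖a • y + c • E z‖ := by
        rw [norm_smul (1 - m) (a • y), norm_smul m (a • y + c • E z),
          Real.norm_eq_abs, Real.norm_eq_abs,
          abs_of_nonneg (show (0:ℝ) ≤ 1 - m by linarith), abs_of_nonneg hm0.le]
    _ ≤ (1 - m) * 1 + m * 1 := by
        have := hay a ha1
        gcongr <;> linarith
    _ = 1 := by ring
  have fact2 : ∀ a c : ℝ, ‖a • x + c • z‖ = 1 → ‖a • y - (m * c) • E z‖ ≤ 1 := by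
    intro a c hc
    have ha1 : |a| ≤ 1 := by rw [← hc]; exact aux_abs_le hx hoxz a c
    have hB1 : ‖a • y - (c * κ) • E z‖ ≤ 1 := by
      have heq : a • y - (c * κ) • E z = B (a • x + c • z) := by
        rw [map_add, map_smul, map_smul, hBx, hBz]
        module
      rw [heq]
      calc ‖B (a • x + c • z)‖ ≤ ‖B‖ * ‖a • x + c • z‖ := B.le_opNorm _
      _ ≤ 1 := by rw [hc, mul_one]; exact hBle
    set s := m / κ with hsdef
    have hs0 : 0 < s := div_pos hm0 hκ
    have hs1 : s ≤ 1 := by rw [hsdef, div_le_one hκ]; exact hmκ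
    have hsk : s * κ = m := div_mul_cancel₀ _ (ne_of_gt hκ)
    have hid : a • y - (m * c) • E z
        = (1 - s) • (a • y) + s • (a • y - (c * κ) • E z) := by
      rw [← hsk]; module
    rw [hid]
    calc ‖(1 - s) • (a • y) + s • (a • y - (c * κ) • E z)‖
        ≤ ‖(1 - s) • (a • y)‖ + ‖s • (a • y - (c * κ) • E z)‖ := norm_add_le _ _
    _ = (1 - s) * ‖a • y‖ + s * ‖a • y - (c * κ) • E z‖ := by
        rw [norm_smul (1 - s) (a • y), norm_smul s (a • y - (c * κ) • E z),
          Real.norm_eq_abs, Real.norm_eq_abs,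
          abs_of_nonneg (show (0:ℝ) ≤ 1 - s by linarith), abs_of_nonneg hs0.le]
    _ ≤ (1 - s) * 1 + s * 1 := by
        have := hay a ha1
        gcongr <;> linarith
    _ = 1 := by ring
  have hsimp : ∀ c : ℝ, (c * (m * ‖E z‖)) • w = (m * c) • E z := by
    intro c
    rw [hw, smul_smul]
    congr 1
    field_simp [ne_of_gt hEzn]
  refine ⟨1, one_pos, m * ‖E z‖, mul_pos hm0 hEzn, ?_⟩
  intro z' hz'1 hoz' w' hw'1 how' a b hball hnorm
  have hz'0 : z' ≠ 0 := by intro h; rw [h, norm_zero] at hz'1; norm_num at hz'1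
  have hw'0 : w' ≠ 0 := by intro h; rw [h, norm_zero] at hw'1; norm_num at hw'1
  have hfz' : f z' = 0 := aux_fz hX hdX hx hz'0 hoz' hfn hfx
  have hgw' : g w' = 0 := aux_fz hY hdY hTx hw'0 how' hgn hgy
  rcases aux_sign hdX hfx hz1 hz'1 hfz hfz' with rfl | rfl <;>
    rcases aux_sign hdY hgy hw1 hw'1 hgw hgw' with rfl | rfl
  · rw [hsimp b]
    exact fact1 a b hnorm
  · rw [smul_neg, hsimp b, ← sub_eq_add_neg]
    exact fact2 a b hnorm
  · have hnorm' : ‖a • x + (-b) • z‖ = 1 := by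
      rw [show a • x + (-b) • z = a • x + b • (-z) from by module]
      exact hnorm
    rw [hsimp b, show a • y + (m * b) • E z = a • y - (m * (-b)) • E z from by module]
    exact fact2 a (-b) hnorm'
  · have hnorm' : ‖a • x + (-b) • z‖ = 1 := by
      rw [show a • x + (-b) • z = a • x + b • (-z) from by module]
      exact hnorm
    rw [smul_neg, hsimp b, ← sub_eq_add_neg,
      show a • y - (m * b) • E z = a • y + (m * (-b)) • E z from by module]
    exact fact1 a (-b) hnorm'
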